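/- Let G be the abelian group with generators η_1, …, η_{g+1} and relations (m_i k)·η_i − (m_{g+1} k)·η_{g+1} = 0 for i = 1, …, g+1 and ∑_{i=1}^{g+1} η_i = 0, where m_1, …, m_{g+1}, k are positive integers. Then the order of the element s = (m_{g+1} k)·η_{g+1} in G equals ∑_{i=1}^{g+1} (m / m_i), where m = lcm(m_1, …, m_{g+1}). -/
import Mathlib

private lemma gcd_div_lcm_eq_one_aux8 {n : ℕ} (m : Fin (n + 1) → ℕ) (hm : ∀ i, 0 < m i) :
    Finset.univ.gcd (fun i => Finset.univ.lcm m / m i) = 1 := by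
  set L := Finset.univ.lcm m with hL
  have hdvd : ∀ i, m i ∣ L := fun i => Finset.dvd_lcm (Finset.mem_univ i)
  have hLpos : 0 < L := by
    rw [Nat.pos_iff_ne_zero, Ne, hL, Finset.lcm_eq_zero_iff]
    rintro ⟨i, -, h⟩
    exact (hm i).ne' h
  by_contra hne
  set d := Finset.univ.gcd (fun i => L / m i) with hd
  have hp : d.minFac.Prime := Nat.minFac_prime hne
  set p := d.minFac with hpp
  have hpd : p ∣ d := Nat.minFac_dvd d
  have hpi : ∀ i, p ∣ L / m i := fun i =>
    hpd.trans (Finset.gcd_dvd (Finset.mem_univ i))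
  have hpL : p ∣ L := (hpi 0).trans (Nat.div_dvd_of_dvd (hdvd 0))
  have hmi : ∀ i, m i ∣ L / p := by
    intro i
    rw [Nat.dvd_div_iff_mul_dvd hpL]
    obtain ⟨t, ht⟩ := hpi i
    exact ⟨t, by rw [← Nat.div_mul_cancel (hdvd i), ht]; ring⟩
  have : L ∣ L / p := Finset.lcm_dvd fun i _ => hmi i
  have h1 : L ≤ L / p := Nat.le_of_dvd (Nat.div_pos (Nat.le_of_dvd hLpos hpL) hp.pos) this
  have h2 : L / p < L := Nat.div_lt_self hLpos hp.one_lt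
  omega

/-- Group-theoretic core of Theorem 2.5 (case a = b = 0): in the abelian group with
generators `η₁,…,η_{g+1}` and relations `(mᵢk)ηᵢ − (m_{g+1}k)η_{g+1} = 0` and
`∑ ηᵢ = 0`, the element `s = (m_{g+1}k)η_{g+1}` has order `∑ᵢ m/mᵢ` with
`m = lcm(m₁,…,m_{g+1})`. -/
theorem stmt8 (g k : ℕ) (hk : 0 < k) (m : Fin (g + 1) → ℕ) (hm : ∀ i, 0 < m i) :
    addOrderOf
      ((Submodule.Quotient.mk
          (((m (Fin.last g) * k : ℕ) : ℤ) • Pi.single (Fin.last g) (1 : ℤ))) :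
        (Fin (g + 1) → ℤ) ⧸
          Submodule.span ℤ
            ({v | ∃ i : Fin (g + 1),
                v = ((m i * k : ℕ) : ℤ) • Pi.single i (1 : ℤ) -
                    ((m (Fin.last g) * k : ℕ) : ℤ) • Pi.single (Fin.last g) (1 : ℤ)} ∪
              {fun _ => (1 : ℤ)})) =
      ∑ i : Fin (g + 1), Finset.univ.lcm m / m i := by
  classical
  set lst := Fin.last g with hlst
  set L := Finset.univ.lcm m with hL
  set N := ∑ i : Fin (g + 1), L / m i with hN
  set v : Fin (g + 1) → ℤ := ((m lst * k : ℕ) : ℤ) • Pi.single lst (1 : ℤ) with hv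
  set r : Fin (g + 1) → (Fin (g + 1) → ℤ) := fun i =>
    ((m i * k : ℕ) : ℤ) • Pi.single i (1 : ℤ) -
      ((m lst * k : ℕ) : ℤ) • Pi.single lst (1 : ℤ) with hr
  set F : Option (Fin (g + 1)) → (Fin (g + 1) → ℤ) :=
    fun o => o.elim (fun _ => (1 : ℤ)) r with hF
  have hsets : ({w | ∃ i : Fin (g + 1), w = r i} ∪ {fun _ => (1 : ℤ)} :
      Set (Fin (g + 1) → ℤ)) = Set.range F := by
    ext x
    constructor
    · rintro (⟨i, rfl⟩ | rfl)
      · exact ⟨some i, rfl⟩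
      · exact ⟨none, rfl⟩
    · rintro ⟨o, rfl⟩
      cases o with
      | none => exact Or.inr rfl
      | some i => exact Or.inl ⟨i, rfl⟩
  rw [hsets]
  -- basic arithmetic facts
  have hdvd : ∀ i, m i ∣ L := fun i => Finset.dvd_lcm (Finset.mem_univ i)
  have hdm : ∀ i, (L / m i) * m i = L := fun i => Nat.div_mul_cancel (hdvd i)
  set d : Fin (g + 1) → ℤ := fun i => ((L / m i : ℕ) : ℤ) with hdz
  have hdmZ : ∀ i, d i * (m i : ℤ) = (L : ℤ) := by
    intro i
    simp only [hdz]
    exact_mod_cast hdm i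
  have hNsum : ∑ i, d i = (N : ℤ) := by rw [hN]; push_cast; rfl
  have hsingle : ∀ (a : Fin (g + 1) → ℤ) (j : Fin (g + 1)),
      ∑ i, a i * (Pi.single i (1 : ℤ) : Fin (g + 1) → ℤ) j = a j := by
    intro a j
    simp [Pi.single_apply]
  -- key characterization
  have key : ∀ n : ℕ,
      ((n : ℤ) • v ∈ Submodule.span ℤ (Set.range F)) ↔ N ∣ n := by
    intro n
    rw [Submodule.mem_span_range_iff_exists_fun]
    constructor
    · rintro ⟨c, hc⟩
      -- pointwise equations
      have E : ∀ j, c none + ∑ i, c (some i) * r i j = (n : ℤ) * v j := by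
        intro j
        have h := congrFun hc j
        rw [Finset.sum_apply] at h
        simp only [Pi.smul_apply, smul_eq_mul] at h
        rw [Fintype.sum_option] at h
        simpa [hF] using h
      have Eu : ∀ j, c none + c (some j) * ((m j : ℤ) * (k : ℤ))
          - (if j = lst then (∑ i, c (some i)) * ((m lst : ℤ) * (k : ℤ)) else 0)
          = (if j = lst then (n : ℤ) * ((m lst : ℤ) * (k : ℤ)) else 0) := by
        intro j
        have h := E j
        have h1 : ∑ i, c (some i) * r i j
            = c (some j) * ((m j : ℤ) * (k : ℤ))
              - (if j = lst then (∑ i, c (some i)) * ((m lst : ℤ) * (k : ℤ)) else 0) := by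
          rw [hr]
          simp only [Pi.sub_apply, Pi.smul_apply, smul_eq_mul, mul_sub]
          rw [Finset.sum_sub_distrib]
          congr 1
          · have := hsingle (fun i => c (some i) * ((m i * k : ℕ) : ℤ)) j
            push_cast at this ⊢
            rw [← this]
            apply Finset.sum_congr rfl
            intro i _
            ring
          · rw [← Finset.sum_mul, Pi.single_apply]
            by_cases hj : j = lst
            · rw [if_pos hj, if_pos hj]
              push_cast
              ring
            · rw [if_neg hj, if_neg hj]
              ring
        have h2 : (n : ℤ) * v j
            = (if j = lst then (n : ℤ) * ((m lst : ℤ) * (k : ℤ)) else 0) := by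
          rw [hv]
          simp only [Pi.smul_apply, smul_eq_mul, Pi.single_apply]
          by_cases hj : j = lst <;> simp [hj]
        rw [h1, h2] at h
        linarith [h]
      -- weighted sum gives N * c none = n * L * k
      set S := ∑ i, c (some i) with hS
      have key1 : (N : ℤ) * c none = (n : ℤ) * ((L : ℤ) * (k : ℤ)) := by
        have h := Finset.sum_congr rfl
          (fun j (_ : j ∈ (Finset.univ : Finset (Fin (g + 1)))) =>
            congrArg (fun z => d j * z) (Eu j))
        simp only [mul_sub, mul_add, mul_ite, mul_zero] at h
        rw [Finset.sum_sub_distrib, Finset.sum_add_distrib] at h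
        rw [Finset.sum_ite_eq' Finset.univ lst
          (fun j => d j * (S * ((m lst : ℤ) * (k : ℤ))))] at h
        rw [Finset.sum_ite_eq' Finset.univ lst
          (fun j => d j * ((n : ℤ) * ((m lst : ℤ) * (k : ℤ))))] at h
        simp only [Finset.mem_univ, if_true] at h
        rw [← Finset.sum_mul, hNsum] at h
        have h2 : ∑ j, d j * (c (some j) * ((m j : ℤ) * (k : ℤ)))
            = S * ((L : ℤ) * (k : ℤ)) := by
          rw [hS, Finset.sum_mul]
          apply Finset.sum_congr rfl
          intro j _
          rw [← hdmZ j]; ring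
        rw [h2] at h
        have h3 : d lst * (S * ((m lst : ℤ) * (k : ℤ))) = S * ((L : ℤ) * (k : ℤ)) := by
          rw [← hdmZ lst]; ring
        have h4 : d lst * ((n : ℤ) * ((m lst : ℤ) * (k : ℤ)))
            = (n : ℤ) * ((L : ℤ) * (k : ℤ)) := by
          rw [← hdmZ lst]; ring
        rw [h3, h4] at h
        linarith [h]
      -- divisibility N ∣ n * d j for each j
      have key2' : ∀ j, j ≠ lst → (N : ℤ) ∣ (n : ℤ) * d j := by
        intro j hj
        have h := Eu j
        simp only [if_neg hj] at h
        have hmk : ((m j : ℤ) * (k : ℤ)) ≠ 0 := by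
          have := hm j
          positivity
        refine ⟨-c (some j), ?_⟩
        have heq : (n : ℤ) * d j * ((m j : ℤ) * (k : ℤ))
            = (N : ℤ) * -c (some j) * ((m j : ℤ) * (k : ℤ)) := by
          have hd : (n : ℤ) * d j * ((m j : ℤ) * (k : ℤ))
              = (n : ℤ) * ((L : ℤ) * (k : ℤ)) := by
            rw [← hdmZ j]; ring
          rw [hd, ← key1]
          have hc0 : c (some j) * ((m j : ℤ) * (k : ℤ)) = -c none := by linarith [h]
          calc (N : ℤ) * c none = (N : ℤ) * -(c (some j) * ((m j : ℤ) * (k : ℤ))) := by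
                rw [hc0]; ring
            _ = (N : ℤ) * -c (some j) * ((m j : ℤ) * (k : ℤ)) := by ring
        exact mul_right_cancel₀ hmk heq
      have key2 : ∀ j, (N : ℤ) ∣ (n : ℤ) * d j := by
        intro j
        by_cases hj : j = lst
        · rw [hj]
          have hsplit : (n : ℤ) * d lst = (n : ℤ) * (∑ i, d i)
              - ∑ i ∈ Finset.univ.erase lst, (n : ℤ) * d i := by
            rw [Finset.mul_sum, ← Finset.sum_erase_add _ _ (Finset.mem_univ lst)]
            ring
          rw [hsplit, hNsum]
          exact dvd_sub ⟨(n : ℤ), mul_comm _ _⟩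
            (Finset.dvd_sum fun i hi => key2' i (Finset.mem_erase.mp hi).1)
        · exact key2' j hj
      -- transfer to ℕ and use gcd
      have keyN : ∀ j, N ∣ n * (L / m j) := by
        intro j
        have h := key2 j
        simp only [hdz] at h
        exact_mod_cast h
      have hgcd : N ∣ n * Finset.univ.gcd (fun j => L / m j) := by
        have h1 : N ∣ Finset.univ.gcd (fun j => n * (L / m j)) :=
          Finset.dvd_gcd fun j _ => keyN j
        rw [Finset.gcd_mul_left] at h1
        simpa using h1
      rw [hL] at hgcd
      rw [gcd_div_lcm_eq_one_aux8 m hm, mul_one] at hgcd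
      exact hgcd
    · rintro ⟨t, rfl⟩
      rw [← Submodule.mem_span_range_iff_exists_fun]
      have base : ((N : ℤ)) • v ∈ Submodule.span ℤ (Set.range F) := by
        rw [Submodule.mem_span_range_iff_exists_fun]
        refine ⟨fun o => o.elim ((L : ℤ) * (k : ℤ)) (fun i => -d i), ?_⟩
        funext j
        rw [Finset.sum_apply, Fintype.sum_option]
        simp only [Pi.smul_apply, smul_eq_mul, Option.elim, mul_one, hF]
        have expand : ∀ i : Fin (g + 1), (-d i) * r i j
            = (-d i * ((m i * k : ℕ) : ℤ)) * (Pi.single i (1 : ℤ) : Fin (g + 1) → ℤ) j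
              + d i * (((m lst * k : ℕ) : ℤ) *
                  (Pi.single lst (1 : ℤ) : Fin (g + 1) → ℤ) j) := by
          intro i
          rw [hr]
          simp only [Pi.sub_apply, Pi.smul_apply, smul_eq_mul]
          ring
        rw [Finset.sum_congr rfl fun i _ => expand i, Finset.sum_add_distrib,
          hsingle (fun i => -d i * ((m i * k : ℕ) : ℤ)) j, ← Finset.sum_mul, hNsum]
        have hLk : d j * ((m j * k : ℕ) : ℤ) = (L : ℤ) * (k : ℤ) := by
          rw [← hdmZ j]; push_cast; ring
        rw [hv]
        simp only [Pi.smul_apply, smul_eq_mul]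
        push_cast at hLk ⊢
        linarith [hLk]
      have hsm : ((N * t : ℕ) : ℤ) • v = (t : ℤ) • ((N : ℤ) • v) := by
        rw [show ((N * t : ℕ) : ℤ) = (t : ℤ) * (N : ℤ) by push_cast; ring, mul_smul]
      rw [hsm]
      exact Submodule.smul_mem _ _ base
  have hnsmul : ∀ n : ℕ,
      (n • (Submodule.Quotient.mk v :
          (Fin (g + 1) → ℤ) ⧸ Submodule.span ℤ (Set.range F)) = 0) ↔ N ∣ n := by
    intro n
    rw [← Nat.cast_smul_eq_nsmul ℤ, ← Submodule.Quotient.mk_smul,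
      Submodule.Quotient.mk_eq_zero]
    exact key n
  exact Nat.dvd_antisymm (addOrderOf_dvd_of_nsmul_eq_zero ((hnsmul N).mpr dvd_rfl))
    ((hnsmul _).mp (addOrderOf_nsmul_eq_zero _))
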